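/- Let n ≥ 2, H a symmetric n×n matrix, v ≠ 0 in ℝⁿ. Then ‖H‖_F² ≥ 2|D_T|² + (⟨Hv,v⟩/|v|²)², where D_T is the component of Hv/|v| orthogonal to v. -/

import Mathlib

open Matrix Finset

theorem frobenius_lower_bound (n : ℕ) (hn : 2 ≤ n)
    (H : Matrix (Fin n) (Fin n) ℝ) (hH : H.IsSymm)
    (v : Fin n → ℝ) (hv : v ≠ 0) :
    let nv := Real.sqrt (∑ i, v i ^ 2)
    let w : Fin n → ℝ := fun i => H.mulVec v i / nv
    let lam : ℝ := (H.mulVec v ⬝ᵥ v) / (∑ i, v i ^ 2)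
    let DT : Fin n → ℝ := fun i => w i - lam * (v i / nv)
    (∑ i, ∑ j, H i j ^ 2) ≥ 2 * (∑ i, DT i ^ 2) + lam ^ 2 := by
  intro nv w lam DT
  set s : ℝ := ∑ i, v i ^ 2 with hs_def
  have hs : 0 < s := by
    obtain ⟨i, hi⟩ : ∃ i, v i ≠ 0 := by
      by_contra h; push_neg at h; exact hv (funext h)
    exact Finset.sum_pos' (fun j _ => sq_nonneg _)
      ⟨i, Finset.mem_univ i, by positivity⟩
  set u : Fin n → ℝ := H.mulVec v with hu_def
  have hu : ∀ i, ∑ j, H i j * v j = u i := fun i => rfl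
  set q : ℝ := ∑ i, u i ^ 2 with hq_def
  set t : ℝ := ∑ i, u i * v i with ht_def
  have hdot : H.mulVec v ⬝ᵥ v = t := rfl
  have hsym : ∀ i j, H i j = H j i := fun i j => hH.apply j i
  set F : ℝ := ∑ i, ∑ j, H i j ^ 2 with hF_def
  have huu : ∑ x, u x * u x = q := by
    rw [hq_def]; exact Finset.sum_congr rfl fun i _ => (sq (u i)).symm
  have hvu : ∑ x, v x * u x = t := by
    rw [ht_def]; exact Finset.sum_congr rfl fun i _ => mul_comm _ _
  have hE2 : ∑ i, v i * ∑ j, H i j * u j = q := by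
    have h0 : ∀ i, v i * ∑ j, H i j * u j = ∑ j, v i * (H i j * u j) := fun i =>
      Finset.mul_sum _ _ _
    simp_rw [h0]
    rw [Finset.sum_comm, ← huu]
    refine Finset.sum_congr rfl fun j _ => ?_
    have h1 : ∑ i, v i * (H i j * u j) = u j * ∑ i, H j i * v i := by
      rw [Finset.mul_sum]
      exact Finset.sum_congr rfl fun i _ => by rw [hsym i j]; ring
    rw [h1, hu]
  -- expansion of the nonnegative sum of squares
  have key0 : (0:ℝ) ≤ ∑ i, ∑ j,
      (s^2 * H i j - s * (u i * v j) - s * (v i * u j) + t * (v i * v j))^2 :=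
    Finset.sum_nonneg fun i _ => Finset.sum_nonneg fun j _ => sq_nonneg _
  have expand : ∑ i, ∑ j,
      (s^2 * H i j - s * (u i * v j) - s * (v i * u j) + t * (v i * v j))^2
      = s^4 * F - 2 * q * s^3 + t^2 * s^2 := by
    have pt : ∀ (i j : Fin n), (s^2 * H i j - s * (u i * v j) - s * (v i * u j)
        + t * (v i * v j))^2
        = s^4 * H i j ^ 2 + s^2 * (u i ^2 * v j ^2) + s^2 * (v i ^2 * u j ^2)
          + t^2 * (v i ^2 * v j ^2)
          - 2*s^3 * (u i * (H i j * v j)) - 2*s^3 * (v i * (H i j * u j))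
          + 2*(s^2*t) * (v i * (H i j * v j))
          + 2*s^2 * ((u i * v i) * (u j * v j))
          - 2*(s*t) * ((u i * v i) * v j ^2)
          - 2*(s*t) * (v i ^2 * (u j * v j)) := fun i j => by ring
    rw [show (∑ i, ∑ j, (s^2 * H i j - s * (u i * v j) - s * (v i * u j)
        + t * (v i * v j))^2) = ∑ i, ∑ j, (s^4 * H i j ^ 2
          + s^2 * (u i ^2 * v j ^2) + s^2 * (v i ^2 * u j ^2)
          + t^2 * (v i ^2 * v j ^2)
          - 2*s^3 * (u i * (H i j * v j)) - 2*s^3 * (v i * (H i j * u j))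
          + 2*(s^2*t) * (v i * (H i j * v j))
          + 2*s^2 * ((u i * v i) * (u j * v j))
          - 2*(s*t) * ((u i * v i) * v j ^2)
          - 2*(s*t) * (v i ^2 * (u j * v j)))
      from Finset.sum_congr rfl fun i _ => Finset.sum_congr rfl fun j _ => pt i j]
    simp only [Finset.sum_sub_distrib, Finset.sum_add_distrib, ← Finset.mul_sum,
      ← Finset.sum_mul]
    simp_rw [hu]
    rw [hE2, huu, hvu, ← hF_def, ← hs_def, ← hq_def, ← ht_def]
    ring
  have key : 2 * q * s - t^2 ≤ F * s^2 := by
    nlinarith [key0, expand, mul_pos hs hs, sq_nonneg s]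
  -- compute the right-hand side
  have hnv : nv = Real.sqrt s := rfl
  have hnv2 : nv ^ 2 = s := by rw [hnv, Real.sq_sqrt hs.le]
  have hnvne : nv ≠ 0 := by
    rw [hnv]; exact (Real.sqrt_pos.mpr hs).ne'
  have hlam : lam = t / s := by rw [← hdot]
  have hDTsum : ∑ i, DT i ^ 2 = (q - 2 * lam * t + lam^2 * s) / s := by
    have hDT : ∀ i, DT i ^ 2 = (u i - lam * v i)^2 / s := by
      intro i
      have h1 : DT i = (u i - lam * v i) / nv := by
        show u i / nv - lam * (v i / nv) = _
        field_simp
      rw [h1, div_pow, hnv2]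
    simp_rw [hDT, ← Finset.sum_div]
    congr 1
    have pt : ∀ i, (u i - lam * v i)^2
        = u i ^ 2 - 2 * lam * (u i * v i) + lam^2 * v i ^ 2 := fun i => by ring
    simp_rw [pt, Finset.sum_add_distrib, Finset.sum_sub_distrib, ← Finset.mul_sum]
    rfl
  have hRHS : 2 * (∑ i, DT i ^ 2) + lam ^ 2 = (2 * q * s - t^2) / s^2 := by
    rw [hDTsum, hlam]
    field_simp
    ring
  rw [ge_iff_le, hRHS, div_le_iff₀ (by positivity)]
  exact key
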